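/- arXiv:1603.09468 — 2 statements merged into one kernel-verified Lean document; each statement's English description precedes it below -/
import Mathlib

section
/- Let λ ≤ 0, α ∈ (0,2), n ≥ 1, and x ∈ Σ_λ = {z ∈ ℝ^n : z_1 < λ}. Then the ball B of radius |x| centered at x¹ := (3|x| + x_1, x') is contained in ℝ^n \ Σ_λ, and for all y ∈ B one has |x − y| ≤ 4|x|; consequently ∫_{Σ_λ} |x − y^λ|^{−(n+α)} dy ≥ ω_n / (4^{n+α} |x|^α), where ω_n is the volume of the unit ball in ℝ^n. -/
open Set MeasureTheory

/-- Reflection of `y` across the hyperplane `{z : z 0 = l}`. -/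
noncomputable def reflHyp {n : ℕ} [NeZero n] (l : ℝ) (y : EuclideanSpace ℝ (Fin n)) :
    EuclideanSpace ℝ (Fin n) :=
  WithLp.toLp 2 (Function.update y 0 (2 * l - y 0))

/-- The point `x¹ = (3|x| + x_1, x')`. -/
noncomputable def shiftPt {n : ℕ} [NeZero n] (x : EuclideanSpace ℝ (Fin n)) :
    EuclideanSpace ℝ (Fin n) :=
  WithLp.toLp 2 (Function.update x 0 (3 * ‖x‖ + x 0))

lemma coord_abs_le_norm {n : ℕ} [NeZero n] (v : EuclideanSpace ℝ (Fin n)) (i : Fin n) :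
    |v i| ≤ ‖v‖ := by
  rw [EuclideanSpace.norm_eq]
  have h1 : |v i| = Real.sqrt (‖v i‖ ^ 2) := by
    rw [Real.sqrt_sq_eq_abs, Real.norm_eq_abs, abs_abs]
  rw [h1]
  exact Real.sqrt_le_sqrt (Finset.single_le_sum
    (f := fun j => ‖v j‖ ^ 2) (fun j _ => sq_nonneg _) (Finset.mem_univ i))

lemma norm_sub_reflHyp {n : ℕ} [NeZero n] (l : ℝ) (x y : EuclideanSpace ℝ (Fin n)) :
    ‖x - reflHyp l y‖ = ‖y - reflHyp l x‖ := by
  rw [EuclideanSpace.norm_eq, EuclideanSpace.norm_eq]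
  congr 1
  refine Finset.sum_congr rfl fun i _ => ?_
  rcases eq_or_ne i 0 with rfl | h
  · simp only [reflHyp, PiLp.sub_apply, PiLp.toLp_apply, Function.update_self, Real.norm_eq_abs, sq_abs]
    ring_nf
  · simp only [reflHyp, PiLp.sub_apply, PiLp.toLp_apply, Function.update_of_ne h, Real.norm_eq_abs, sq_abs]
    rw [← neg_sub (y i) (x i), neg_sq]

lemma reflHyp_zero {n : ℕ} [NeZero n] (l : ℝ) (y : EuclideanSpace ℝ (Fin n)) :
    reflHyp l y 0 = 2 * l - y 0 := by
  simp [reflHyp]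

lemma aux_rpow_bound {d t s : ℝ} (hd : 0 < d) (ht : d ≤ t) (hs : 0 < s) :
    t ^ (-s) ≤ ((1 + d) / d) ^ s * (1 + t) ^ (-s) := by
  have ht0 : 0 < t := hd.trans_le ht
  have h1t : (0 : ℝ) < 1 + t := by linarith
  have h1 : 1 + t ≤ (1 + d) / d * t := by
    rw [div_mul_eq_mul_div, le_div_iff₀ hd]
    nlinarith
  have h2 : (1 + t) ^ s ≤ ((1 + d) / d) ^ s * t ^ s := by
    rw [← Real.mul_rpow (by positivity) ht0.le]
    exact Real.rpow_le_rpow h1t.le h1 hs.le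
  rw [Real.rpow_neg ht0.le, Real.rpow_neg h1t.le, inv_eq_one_div, inv_eq_one_div,
    mul_one_div, div_le_div_iff₀ (by positivity) (by positivity)]
  linarith

/-- For `λ ≤ 0` and `x ∈ Σ_λ`, the ball of radius `|x|` centered at
`x¹ = (3|x| + x_1, x')` lies outside `Σ_λ`, the kernel is bounded below on it,
and consequently `∫_{Σ_λ} |x − y^λ|^{−(n+α)} dy ≥ ω_n / (4^{n+α} |x|^α)`. -/
theorem kernel_integral_lower_bound {n : ℕ} [NeZero n] (α l : ℝ)
    (hα : α ∈ Ioo (0 : ℝ) 2) (hl : l ≤ 0)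
    (x : EuclideanSpace ℝ (Fin n)) (hx : x 0 < l) (hx0 : x ≠ 0) :
    Metric.ball (shiftPt x) ‖x‖ ⊆ {y : EuclideanSpace ℝ (Fin n) | y 0 < l}ᶜ ∧
    (∀ y ∈ Metric.ball (shiftPt x) ‖x‖, ‖x - y‖ ≤ 4 * ‖x‖) ∧
    (volume (Metric.ball (0 : EuclideanSpace ℝ (Fin n)) 1)).toReal /
        ((4 : ℝ) ^ ((n : ℝ) + α) * ‖x‖ ^ α) ≤
      ∫ y in {y : EuclideanSpace ℝ (Fin n) | y 0 < l},
        ‖x - reflHyp l y‖ ^ (-((n : ℝ) + α)) := by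
  obtain ⟨hα0, hα2⟩ := hα
  have hxn : (0 : ℝ) < ‖x‖ := norm_pos_iff.mpr hx0
  have hx00 : x 0 < 0 := lt_of_lt_of_le hx hl
  have hx0n : -x 0 ≤ ‖x‖ := by
    have := coord_abs_le_norm x 0
    rwa [abs_of_neg hx00] at this
  have hsp0 : shiftPt x 0 = 3 * ‖x‖ + x 0 := by simp [shiftPt]
  -- claim 1
  have claim1 : ∀ y ∈ Metric.ball (shiftPt x) ‖x‖, l < y 0 := by
    intro y hy
    have h0 : |y 0 - shiftPt x 0| ≤ ‖y - shiftPt x‖ := by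
      have := coord_abs_le_norm (y - shiftPt x) 0
      simpa using this
    have hyd : ‖y - shiftPt x‖ < ‖x‖ := by
      rw [← dist_eq_norm]; exact Metric.mem_ball.mp hy
    have habs : |y 0 - shiftPt x 0| < ‖x‖ := lt_of_le_of_lt h0 hyd
    rw [abs_lt] at habs
    rw [hsp0] at habs
    linarith [habs.1]
  refine ⟨fun y hy => by simpa using not_lt.mpr (claim1 y hy).le, ?_⟩
  -- claim 2
  have hxx1 : ‖x - shiftPt x‖ = 3 * ‖x‖ := by
    have heq : x - shiftPt x = EuclideanSpace.single (0 : Fin n) (-(3 * ‖x‖)) := by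
      refine PiLp.ext fun i => ?_
      rcases eq_or_ne i 0 with rfl | h
      · simp [shiftPt, EuclideanSpace.single_apply]
      · simp [shiftPt, EuclideanSpace.single_apply, h, Function.update_of_ne h]
    rw [heq, EuclideanSpace.norm_single, Real.norm_eq_abs, abs_neg,
      abs_of_nonneg (by positivity)]
  have claim2 : ∀ y ∈ Metric.ball (shiftPt x) ‖x‖, ‖x - y‖ ≤ 4 * ‖x‖ := by
    intro y hy
    have h1 : dist x y ≤ dist x (shiftPt x) + dist (shiftPt x) y := dist_triangle _ _ _
    have h2 : dist (shiftPt x) y < ‖x‖ := by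
      rw [dist_comm]; exact Metric.mem_ball.mp hy
    rw [dist_eq_norm] at h1 h2
    rw [dist_eq_norm, hxx1] at h1
    calc ‖x - y‖ ≤ 3 * ‖x‖ + ‖shiftPt x - y‖ := h1
      _ ≤ 3 * ‖x‖ + ‖x‖ := by linarith
      _ = 4 * ‖x‖ := by ring
  refine ⟨claim2, ?_⟩
  -- part 3
  set s : ℝ := (n : ℝ) + α with hs_def
  have hn1 : (1 : ℝ) ≤ (n : ℝ) := by exact_mod_cast Nat.one_le_iff_ne_zero.mpr (NeZero.ne n)
  have hs0 : 0 < s := by positivity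
  set c : EuclideanSpace ℝ (Fin n) := reflHyp l x with hc_def
  set Sl : Set (EuclideanSpace ℝ (Fin n)) := {y | y 0 < l} with hS_def
  have hSmeas : MeasurableSet Sl := by
    have : Continuous fun y : EuclideanSpace ℝ (Fin n) => y 0 :=
      (continuous_apply (0 : Fin n)).comp (PiLp.continuous_ofLp (p := 2) (β := fun _ : Fin n => ℝ))
    exact (isOpen_lt this continuous_const).measurableSet
  -- rewrite integrand
  have hfun : (fun y : EuclideanSpace ℝ (Fin n) => ‖x - reflHyp l y‖ ^ (-s))
      = fun y => ‖y - c‖ ^ (-s) := funext fun y => by rw [norm_sub_reflHyp]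
  -- ball B'' inside Sl
  set c1 : EuclideanSpace ℝ (Fin n) := reflHyp l (shiftPt x) with hc1_def
  have hmem : ∀ y ∈ Metric.ball c1 ‖x‖, reflHyp l y ∈ Metric.ball (shiftPt x) ‖x‖ := by
    intro y hy
    rw [Metric.mem_ball, dist_comm, dist_eq_norm, norm_sub_reflHyp, ← dist_eq_norm]
    exact Metric.mem_ball.mp hy
  have hBsub : Metric.ball c1 ‖x‖ ⊆ Sl := by
    intro y hy
    have := claim1 _ (hmem y hy)
    rw [reflHyp_zero] at this
    show y 0 < l
    linarith
  -- integrability on Sl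
  have hd : (0 : ℝ) < l - x 0 := by linarith
  have hc0 : c 0 = 2 * l - x 0 := reflHyp_zero l x
  have hlow : ∀ y ∈ Sl, l - x 0 ≤ ‖y - c‖ := by
    intro y hy
    have h0 : |(y - c) 0| ≤ ‖y - c‖ := coord_abs_le_norm _ 0
    have h1 : (y - c) 0 = y 0 - (2 * l - x 0) := by
      simp [PiLp.sub_apply, hc0]
    have hy' : y 0 < l := hy
    calc l - x 0 ≤ -(y 0 - (2 * l - x 0)) := by linarith
      _ ≤ |(y - c) 0| := by rw [h1]; exact neg_le_abs _
      _ ≤ ‖y - c‖ := h0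
  have hmeas_g : Measurable fun y : EuclideanSpace ℝ (Fin n) => ‖y - c‖ ^ (-s) := by
    fun_prop
  have hns : (Module.finrank ℝ (EuclideanSpace ℝ (Fin n)) : ℝ) < s := by
    rw [finrank_euclideanSpace_fin]; simp only [hs_def]; linarith
  have hint_big : Integrable (fun y : EuclideanSpace ℝ (Fin n) =>
      ((1 + (l - x 0)) / (l - x 0)) ^ s * (1 + ‖y - c‖) ^ (-s)) volume := by
    have h1 : Integrable (fun z : EuclideanSpace ℝ (Fin n) => (1 + ‖z‖) ^ (-s)) volume :=
      integrable_one_add_norm hns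
    have h2 : MeasurePreserving (fun y : EuclideanSpace ℝ (Fin n) => y - c) volume volume :=
      measurePreserving_sub_right volume c
    have h3 : Integrable ((fun z : EuclideanSpace ℝ (Fin n) => (1 + ‖z‖) ^ (-s)) ∘
        fun y => y - c) volume := (h2.integrable_comp h1.aestronglyMeasurable).mpr h1
    exact h3.const_mul _
  have hIntOn : IntegrableOn (fun y : EuclideanSpace ℝ (Fin n) => ‖y - c‖ ^ (-s)) Sl volume := by
    refine Integrable.mono' hint_big.integrableOn hmeas_g.aestronglyMeasurable ?_
    rw [ae_restrict_iff' hSmeas]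
    refine ae_of_all _ fun y hy => ?_
    rw [Real.norm_eq_abs, abs_of_nonneg (Real.rpow_nonneg (norm_nonneg _) _)]
    exact aux_rpow_bound hd (hlow y hy) hs0
  -- lower bound on ball
  have hpt : ∀ y ∈ Metric.ball c1 ‖x‖, (4 * ‖x‖) ^ (-s) ≤ ‖y - c‖ ^ (-s) := by
    intro y hy
    have h1 : ‖x - reflHyp l y‖ ≤ 4 * ‖x‖ := claim2 _ (hmem y hy)
    have h2 : ‖y - c‖ = ‖x - reflHyp l y‖ := (norm_sub_reflHyp l x y).symm
    have h3 : 0 < ‖y - c‖ := by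
      have := hlow y (hBsub hy); linarith
    rw [h2] at h3 ⊢
    exact Real.rpow_le_rpow_of_nonpos h3 h1 (by linarith)
  have hvol : (volume (Metric.ball c1 ‖x‖)).toReal
      = ‖x‖ ^ n * (volume (Metric.ball (0 : EuclideanSpace ℝ (Fin n)) 1)).toReal := by
    rw [Measure.addHaar_ball_of_pos volume c1 hxn, ENNReal.toReal_mul,
      ENNReal.toReal_ofReal (by positivity), finrank_euclideanSpace_fin]
  have hball_int : IntegrableOn (fun y : EuclideanSpace ℝ (Fin n) => ‖y - c‖ ^ (-s))
      (Metric.ball c1 ‖x‖) volume := hIntOn.mono_set hBsub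
  have h1 : (4 * ‖x‖) ^ (-s) * (volume (Metric.ball c1 ‖x‖)).toReal
      ≤ ∫ y in Metric.ball c1 ‖x‖, ‖y - c‖ ^ (-s) :=
    setIntegral_ge_of_const_le_real measurableSet_ball measure_ball_lt_top.ne
      hpt hball_int
  have h2 : (∫ y in Metric.ball c1 ‖x‖, ‖y - c‖ ^ (-s)) ≤ ∫ y in Sl, ‖y - c‖ ^ (-s) :=
    setIntegral_mono_set hIntOn
      (ae_of_all _ fun y => Real.rpow_nonneg (norm_nonneg _) _)
      (HasSubset.Subset.eventuallyLE hBsub)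
  rw [show (∫ y in {y : EuclideanSpace ℝ (Fin n) | y 0 < l},
        ‖x - reflHyp l y‖ ^ (-((n : ℝ) + α))) = ∫ y in Sl, ‖y - c‖ ^ (-s) by rw [hfun]]
  refine le_trans ?_ (le_trans h1 h2)
  rw [hvol]
  -- arithmetic
  set ω : ℝ := (volume (Metric.ball (0 : EuclideanSpace ℝ (Fin n)) 1)).toReal with hω
  have hω0 : 0 ≤ ω := ENNReal.toReal_nonneg
  have key : (4 * ‖x‖) ^ (-s) * (‖x‖ ^ n * ω) = ω / ((4 : ℝ) ^ s * ‖x‖ ^ α) := by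
    rw [Real.rpow_neg (by positivity), Real.mul_rpow (by norm_num) hxn.le,
      hs_def, Real.rpow_add hxn, ← Real.rpow_natCast ‖x‖ n]
    have h4 : ((4 : ℝ) ^ ((n : ℝ) + α)) = (4 : ℝ) ^ (n : ℝ) * (4 : ℝ) ^ α :=
      Real.rpow_add (by norm_num) _ _
    rw [h4]
    have hne1 : ((4 : ℝ) ^ (n : ℝ)) ≠ 0 := by positivity
    have hne2 : ((4 : ℝ) ^ α) ≠ 0 := by positivity
    have hne3 : (‖x‖ ^ (n : ℝ)) ≠ 0 := by positivity
    have hne4 : (‖x‖ ^ α) ≠ 0 := by positivity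
    field_simp
  rw [hs_def] at key
  rw [key]
end

section
/- Symmetry in all directions implies radial symmetry: Let u: ℝ^n → ℝ. Suppose that for every unit vector e ∈ ℝ^n there exists c_e ∈ ℝ such that u is symmetric with respect to the hyperplane {x : x·e = c_e}, i.e. u(x + 2(c_e − x·e)e) = u(x) for all x. Then there exists x₀ ∈ ℝ^n such that u is radially symmetric about x₀: u(x) = u(y) whenever |x − x₀| = |y − x₀|. -/
open scoped RealInnerProductSpace

namespace RadialAux
set_option linter.unusedSectionVars false
variable {F : Type*} [NormedAddCommGroup F] [InnerProductSpace ℝ F]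




def Refl (u : F → ℝ) (e : F) (c : ℝ) : Prop :=
  ∀ x, u (x + (2 * (c - ⟪x, e⟫)) • e) = u x

def Trans (u : F → ℝ) (w : F) : Prop := ∀ x, u (x + w) = u x

lemma inner_self_one {e : F} (he : ‖e‖ = 1) : ⟪e, e⟫ = 1 := by
  rw [real_inner_self_eq_norm_mul_norm, he, one_mul]

lemma refl_neg {u : F → ℝ} {e : F} {c : ℝ} (h : Refl u e c) : Refl u (-e) (-c) := by
  intro x
  have hv : x + (2 * (-c - ⟪x, -e⟫)) • (-e) = x + (2 * (c - ⟪x, e⟫)) • e := by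
    simp only [inner_neg_right]
    module
  rw [hv]; exact h x

lemma trans_zero (u : F → ℝ) : Trans u 0 := fun x => by simp

lemma trans_add {u : F → ℝ} {w₁ w₂ : F} (h1 : Trans u w₁) (h2 : Trans u w₂) :
    Trans u (w₁ + w₂) := by
  intro x
  rw [show x + (w₁ + w₂) = (x + w₁) + w₂ by abel, h2, h1]

lemma trans_sub {u : F → ℝ} {w₁ w₂ : F} (h1 : Trans u w₁) (h2 : Trans u w₂) :
    Trans u (w₁ - w₂) := by
  intro x
  have h2' := h2 (x + (w₁ - w₂))
  rw [show x + (w₁ - w₂) + w₂ = x + w₁ by abel, h1 x] at h2'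
  exact h2'.symm

lemma trans_nsmul {u : F → ℝ} {w : F} (h1 : Trans u w) : ∀ k : ℕ, Trans u (k • w) := by
  intro k
  induction k with
  | zero => simpa using trans_zero u
  | succ k ih =>
      have := trans_add ih h1
      rwa [show (k : ℕ) • w + w = (k + 1 : ℕ) • w by rw [succ_nsmul]] at this

lemma norm_reflect {e v : F} (he : ‖e‖ = 1) : ‖v - (2 * ⟪v, e⟫) • e‖ = ‖v‖ := by
  have h2 : ‖v - (2 * ⟪v, e⟫) • e‖ ^ 2 = ‖v‖ ^ 2 := by
    rw [norm_sub_sq_real]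
    rw [real_inner_smul_right, norm_smul]
    have hee := inner_self_one he
    simp [he, Real.norm_eq_abs]
    ring_nf
    nlinarith [sq_abs (⟪v, e⟫), sq_nonneg ⟪v,e⟫]
  have := congrArg Real.sqrt h2
  rwa [Real.sqrt_sq (norm_nonneg _), Real.sqrt_sq (norm_nonneg _)] at this

lemma trans_conj {u : F → ℝ} {f w : F} {c : ℝ} (hf : ‖f‖ = 1)
    (hc : Refl u f c) (hw : Trans u w) : Trans u (w - (2 * ⟪w, f⟫) • f) := by
  intro x
  have hff := inner_self_one hf
  have key : (x + (w - (2 * ⟪w, f⟫) • f)) + (2 * (c - ⟪x + (w - (2*⟪w,f⟫)•f), f⟫)) • f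
      = (x + (2 * (c - ⟪x, f⟫)) • f) + w := by
    simp only [inner_add_left, inner_sub_left, real_inner_smul_left, hff]
    match_scalars <;> ring
  have h1 := hc (x + (w - (2 * ⟪w, f⟫) • f))
  rw [key] at h1
  rw [← h1, hw, hc]

lemma refl_conj {u : F → ℝ} {e g : F} {ce cg : ℝ} (he : ‖e‖ = 1)
    (h1 : Refl u e ce) (h2 : Refl u g cg) :
    Refl u (g - (2 * ⟪g, e⟫) • e) (cg - 2 * ce * ⟪g, e⟫) := by
  intro x
  have hee := inner_self_one he
  set g' := g - (2 * ⟪g, e⟫) • e with hg'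
  set t := 2 * ((cg - 2 * ce * ⟪g, e⟫) - ⟪x, g'⟫) with ht
  have key : (x + t • g') + (2 * (ce - ⟪x + t • g', e⟫)) • e
      = (x + (2 * (ce - ⟪x, e⟫)) • e) + t • g := by
    simp only [ht, hg', inner_add_left, inner_sub_left, inner_sub_right,
      real_inner_smul_left, real_inner_smul_right, hee]
    match_scalars <;> ring
  have key2 : t = 2 * (cg - ⟪x + (2 * (ce - ⟪x, e⟫)) • e, g⟫) := by
    simp only [ht, hg', inner_add_left, inner_sub_left, inner_sub_right,
      real_inner_smul_left, real_inner_smul_right, hee]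
    rw [real_inner_comm e g]
    ring
  have e1 := h1 (x + t • g')
  rw [key] at e1
  have e2 := h2 (x + (2 * (ce - ⟪x, e⟫)) • e)
  rw [← key2] at e2
  rw [← e1, e2, h1]

lemma refl_unique {u : F → ℝ} (htriv : ∀ w, Trans u w → w = 0) {e : F} {c c' : ℝ}
    (he : ‖e‖ = 1) (h1 : Refl u e c) (h2 : Refl u e c') : c = c' := by
  have hee := inner_self_one he
  have htr : Trans u ((2 * (c - c')) • e) := by
    intro x
    have key : (x + (2 * (c' - ⟪x, e⟫)) • e) + (2 * (c - ⟪x + (2 * (c' - ⟪x, e⟫)) • e, e⟫)) • e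
        = x + (2 * (c - c')) • e := by
      simp only [inner_add_left, real_inner_smul_left, hee]
      match_scalars <;> ring
    have e1 := h1 (x + (2 * (c' - ⟪x, e⟫)) • e)
    rw [key] at e1
    rw [e1, h2]
  have := htriv _ htr
  rcases smul_eq_zero.mp this with hs | hs
  · have : ‖e‖ ≠ 0 := by rw [he]; norm_num
    linarith [hs]
  · exact absurd hs (by intro hh; rw [hh] at he; simp at he)

lemma norm_unit_comb {a b : F} (ha : ‖a‖ = 1) (hb : ‖b‖ = 1) (hab : ⟪a, b⟫ = 0)
    {p q : ℝ} (hpq : p ^ 2 + q ^ 2 = 1) : ‖p • a + q • b‖ = 1 := by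
  have h2 : ‖p • a + q • b‖ ^ 2 = 1 := by
    rw [norm_add_sq_real, real_inner_smul_left, real_inner_smul_right, hab,
      norm_smul, norm_smul, ha, hb]
    simp only [Real.norm_eq_abs, mul_one, mul_zero]
    rw [sq_abs, sq_abs]
    linarith [hpq]
  have := congrArg Real.sqrt h2
  rwa [Real.sqrt_sq (norm_nonneg _), Real.sqrt_one] at this

lemma trans_line {u : F → ℝ}
    (h : ∀ e : F, ‖e‖ = 1 → ∃ c, Refl u e c)
    {w b : F} (hw : Trans u w) (hw0 : w ≠ 0) (hb : ‖b‖ = 1) (hwb : ⟪w, b⟫ = 0) :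
    ∀ r : ℝ, Trans u (r • b) := by
  have hnw : (0:ℝ) < ‖w‖ := norm_pos_iff.mpr hw0
  set a : F := ‖w‖⁻¹ • w with hadef
  have ha : ‖a‖ = 1 := by
    rw [hadef, norm_smul, Real.norm_eq_abs, abs_inv, abs_of_pos hnw,
      inv_mul_cancel₀ (ne_of_gt hnw)]
  have hab : ⟪a, b⟫ = 0 := by rw [hadef, real_inner_smul_left, hwb, mul_zero]
  have hwa : ⟪w, a⟫ = ‖w‖ := by
    rw [hadef, real_inner_smul_right, real_inner_self_eq_norm_mul_norm]
    field_simp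
  have step1 : ∀ s : ℝ, |s| ≤ 2 * ‖w‖ → Trans u (s • b) := by
    intro s hs
    set m : ℝ := s / (2 * ‖w‖) with hm
    have hm1 : |m| ≤ 1 := by
      rw [hm, abs_div, abs_of_pos (by linarith : (0:ℝ) < 2 * ‖w‖)]
      rw [div_le_one (by linarith)]
      exact hs
    set θ : ℝ := Real.arcsin m / 2 with hθ
    set p : ℝ := Real.cos θ with hp
    set q : ℝ := Real.sin θ with hq
    have hpq : p ^ 2 + q ^ 2 = 1 := by
      rw [hp, hq]; rw [add_comm]; exact Real.sin_sq_add_cos_sq θ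
    have h2qp : 2 * (q * p) = m := by
      have hs2 : Real.sin (2 * θ) = 2 * Real.sin θ * Real.cos θ := Real.sin_two_mul θ
      have h2θ : (2:ℝ) * θ = Real.arcsin m := by rw [hθ]; ring
      rw [h2θ, Real.sin_arcsin (neg_le_of_abs_le hm1) (le_of_abs_le hm1)] at hs2
      rw [hq, hp]; linarith [hs2]
    set f₁ : F := p • a + q • b with hf1
    set f₂ : F := p • a + (-q) • b with hf2
    have hf1n : ‖f₁‖ = 1 := norm_unit_comb ha hb hab hpq
    have hf2n : ‖f₂‖ = 1 := norm_unit_comb ha hb hab (by nlinarith [hpq])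
    obtain ⟨c₁, hc₁⟩ := h f₁ hf1n
    obtain ⟨c₂, hc₂⟩ := h f₂ hf2n
    have t1 : Trans u ((2 * ⟪w, f₁⟫) • f₁) := by
      have := trans_sub hw (trans_conj hf1n hc₁ hw)
      rwa [show w - (w - (2*⟪w,f₁⟫)•f₁) = (2*⟪w,f₁⟫)•f₁ by abel] at this
    have t2 : Trans u ((2 * ⟪w, f₂⟫) • f₂) := by
      have := trans_sub hw (trans_conj hf2n hc₂ hw)
      rwa [show w - (w - (2*⟪w,f₂⟫)•f₂) = (2*⟪w,f₂⟫)•f₂ by abel] at this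
    have t3 := trans_sub t1 t2
    have hv : (2 * ⟪w, f₁⟫) • f₁ - (2 * ⟪w, f₂⟫) • f₂ = s • b := by
      have hwf1 : ⟪w, f₁⟫ = p * ‖w‖ := by
        simp only [hf1, hadef, inner_add_right, real_inner_smul_right, hwb,
          real_inner_self_eq_norm_mul_norm, mul_zero, add_zero]
        field_simp
      have hwf2 : ⟪w, f₂⟫ = p * ‖w‖ := by
        simp only [hf2, hadef, inner_add_right, real_inner_smul_right, hwb,
          real_inner_self_eq_norm_mul_norm, mul_zero, add_zero, neg_mul, neg_zero]
        field_simp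
      rw [hwf1, hwf2, hf1, hf2]
      have hsval : s = 2 * (q * p) * (2 * ‖w‖) := by
        rw [h2qp, hm, div_mul_cancel₀ _ (by positivity : (2:ℝ) * ‖w‖ ≠ 0)]
      rw [hsval]
      match_scalars <;> ring
    rwa [hv] at t3
  intro r
  obtain ⟨k₀, hk₀⟩ := exists_nat_ge (|r| / (2 * ‖w‖))
  set K : ℕ := k₀ + 1 with hK
  have hKpos : (0:ℝ) < (K:ℝ) := by positivity
  have hrK : |r| ≤ (K:ℝ) * (2 * ‖w‖) := by
    have : |r| / (2 * ‖w‖) ≤ (K:ℝ) := by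
      push_cast [hK]; linarith
    calc |r| = (|r| / (2 * ‖w‖)) * (2 * ‖w‖) := by field_simp
    _ ≤ (K:ℝ) * (2 * ‖w‖) := by
        apply mul_le_mul_of_nonneg_right this (by positivity)
  have hs : |r / (K:ℝ)| ≤ 2 * ‖w‖ := by
    rw [abs_div, abs_of_pos hKpos, div_le_iff₀ hKpos]
    rw [mul_comm]
    exact hrK
  have := trans_nsmul (step1 (r / (K:ℝ)) hs) K
  rwa [show (K:ℕ) • ((r / (K:ℝ)) • b) = r • b by
    rw [← Nat.cast_smul_eq_nsmul ℝ, smul_smul, mul_div_cancel₀ _ (ne_of_gt hKpos)]] at this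

lemma exists_unit_orthogonal [FiniteDimensional ℝ F]
    (hrank : 2 ≤ Module.finrank ℝ F) (w : F) :
    ∃ b : F, ‖b‖ = 1 ∧ ⟪w, b⟫ = 0 := by
  classical
  set f : F →ₗ[ℝ] ℝ :=
    { toFun := fun v => ⟪w, v⟫
      map_add' := fun x y => inner_add_right w x y
      map_smul' := fun
        | c, x => real_inner_smul_right w x c }
  have hker : LinearMap.ker f ≠ ⊥ := by
    intro hbot
    have h1 := LinearMap.finrank_range_add_finrank_ker f
    have h2 : Module.finrank ℝ (LinearMap.range f) ≤ 1 := by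
      have := Submodule.finrank_le (LinearMap.range f)
      simpa using this
    rw [hbot, finrank_bot] at h1
    omega
  obtain ⟨v, hv, hv0⟩ := Submodule.exists_mem_ne_zero_of_ne_bot hker
  have hfv : ⟪w, v⟫ = 0 := hv
  have hnv : (0:ℝ) < ‖v‖ := norm_pos_iff.mpr hv0
  refine ⟨‖v‖⁻¹ • v, ?_, ?_⟩
  · rw [norm_smul, Real.norm_eq_abs, abs_inv, abs_of_pos hnv, inv_mul_cancel₀ (ne_of_gt hnv)]
  · rw [real_inner_smul_right, hfv, mul_zero]

lemma trans_total [FiniteDimensional ℝ F] (hrank : 2 ≤ Module.finrank ℝ F)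
    {u : F → ℝ} (h : ∀ e : F, ‖e‖ = 1 → ∃ c, Refl u e c)
    {w : F} (hw : Trans u w) (hw0 : w ≠ 0) : ∀ z, Trans u z := by
  obtain ⟨b, hb, hwb⟩ := exists_unit_orthogonal hrank w
  have hline := trans_line h hw hw0 hb hwb
  have hbne : b ≠ 0 := by intro hh; rw [hh] at hb; simp at hb
  have hTb : Trans u b := by simpa using hline 1
  intro z
  set z' : F := z - ⟪z, b⟫ • b with hz'
  have hbz' : ⟪b, z'⟫ = 0 := by
    rw [hz', inner_sub_right, real_inner_smul_right, inner_self_one hb,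
      real_inner_comm b z]
    ring
  have hz'T : Trans u z' := by
    by_cases hz0 : z' = 0
    · rw [hz0]; exact trans_zero u
    · have hnz' : (0:ℝ) < ‖z'‖ := norm_pos_iff.mpr hz0
      have hb' : ‖(‖z'‖⁻¹ • z' : F)‖ = 1 := by
        rw [norm_smul, Real.norm_eq_abs, abs_inv, abs_of_pos hnz',
          inv_mul_cancel₀ (ne_of_gt hnz')]
      have hbb' : ⟪b, ‖z'‖⁻¹ • z'⟫ = 0 := by
        rw [real_inner_smul_right, hbz', mul_zero]
      have := trans_line h hTb hbne hb' hbb' ‖z'‖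
      rwa [smul_inv_smul₀ (ne_of_gt hnz')] at this
  have := trans_add hz'T (hline ⟪z, b⟫)
  rwa [show z' + ⟪z, b⟫ • b = z by rw [hz']; abel] at this

lemma refl_const_eq {u : F → ℝ}
    (htriv : ∀ w, Trans u w → w = 0)
    {ι : Type*} [Fintype ι] [DecidableEq ι]
    (b : OrthonormalBasis ι ℝ F) (c : ι → ℝ)
    (hc : ∀ i, Refl u (b i) (c i)) :
    ∀ g cg, ‖g‖ = 1 → Refl u g cg → cg = ∑ i, c i * ⟪b i, g⟫ := by
  intro g cg hg hcg
  have hbnorm : ∀ i, ‖b i‖ = 1 := fun i => b.orthonormal.1 i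
  have main : ∀ F' : Finset ι,
      ‖g - ∑ i ∈ F', (2 * ⟪g, b i⟫) • b i‖ = 1 ∧
      Refl u (g - ∑ i ∈ F', (2 * ⟪g, b i⟫) • b i)
        (cg - 2 * ∑ i ∈ F', c i * ⟪g, b i⟫) := by
    intro F'
    induction F' using Finset.induction_on with
    | empty => simpa using ⟨hg, hcg⟩
    | insert k F' hk ih =>
        obtain ⟨ihn, ihr⟩ := ih
        set G : F := g - ∑ i ∈ F', (2 * ⟪g, b i⟫) • b i with hG
        have hGk : ⟪G, b k⟫ = ⟪g, b k⟫ := by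
          rw [hG, inner_sub_left, sum_inner]
          have : ∀ i ∈ F', ⟪(2 * ⟪g, b i⟫) • b i, b k⟫ = 0 := by
            intro i hi
            rw [real_inner_smul_left, b.orthonormal.2 (by rintro rfl; exact hk hi), mul_zero]
          rw [Finset.sum_eq_zero this, sub_zero]
        have step := refl_conj (hbnorm k) (hc k) ihr
        rw [hGk] at step
        constructor
        · have := norm_reflect (e := b k) (v := G) (hbnorm k)
          rw [hGk] at this
          rw [show g - ∑ i ∈ insert k F', (2 * ⟪g, b i⟫) • b i
              = G - (2 * ⟪g, b k⟫) • b k by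
            rw [hG, Finset.sum_insert hk]; abel]
          rw [this, ihn]
        · rw [show g - ∑ i ∈ insert k F', (2 * ⟪g, b i⟫) • b i
              = G - (2 * ⟪g, b k⟫) • b k by
            rw [hG, Finset.sum_insert hk]; abel,
            show cg - 2 * ∑ i ∈ insert k F', c i * ⟪g, b i⟫
              = (cg - 2 * ∑ i ∈ F', c i * ⟪g, b i⟫) - 2 * c k * ⟪g, b k⟫ by
            rw [Finset.sum_insert hk]; ring]
          exact step
  obtain ⟨hn, hr⟩ := main Finset.univ
  have hsum : ∑ i, ⟪g, b i⟫ • b i = g := by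
    have := b.sum_repr' g
    calc ∑ i, ⟪g, b i⟫ • b i = ∑ i, ⟪b i, g⟫ • b i := by
          simp_rw [real_inner_comm]
    _ = g := this
  have hVeq : g - ∑ i, (2 * ⟪g, b i⟫) • b i = -g := by
    have h2 : ∑ i, (2 * ⟪g, b i⟫) • b i = (2:ℝ) • ∑ i, ⟪g, b i⟫ • b i := by
      rw [Finset.smul_sum]
      congr 1
      funext i
      rw [smul_smul]
    rw [h2, hsum]
    module
  rw [hVeq] at hn hr
  have hneg : Refl u (-g) (-cg) := refl_neg hcg
  have := refl_unique htriv hn hr hneg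
  have hcomm : ∑ i, c i * ⟪g, b i⟫ = ∑ i, c i * ⟪b i, g⟫ := by
    simp_rw [real_inner_comm]
  linarith [this, hcomm ▸ this]

lemma reflect_point {x y x₀ : F} (hxy : x ≠ y) (hnorm : ‖x - x₀‖ = ‖y - x₀‖) :
    ‖(‖x - y‖⁻¹) • (x - y)‖ = 1 ∧
    x + (2 * (⟪x₀, (‖x-y‖⁻¹)•(x-y)⟫ - ⟪x, (‖x-y‖⁻¹)•(x-y)⟫)) • ((‖x-y‖⁻¹)•(x-y)) = y := by
  have hd0 : x - y ≠ 0 := sub_ne_zero.mpr hxy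
  have hnd : (0:ℝ) < ‖x - y‖ := norm_pos_iff.mpr hd0
  have hunit : ‖(‖x - y‖⁻¹) • (x - y)‖ = 1 := by
    rw [norm_smul, Real.norm_eq_abs, abs_inv, abs_of_pos hnd, inv_mul_cancel₀ (ne_of_gt hnd)]
  refine ⟨hunit, ?_⟩
  have hkey : 2 * ⟪x - x₀, x - y⟫ = ‖x - y‖ ^ 2 := by
    have h2 : ‖x - x₀‖ ^ 2 = ‖y - x₀‖ ^ 2 := by rw [hnorm]
    have h4 : y - x₀ = (x - x₀) - (x - y) := by abel
    have h3 : ‖(x - x₀) - (x - y)‖^2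
        = ‖x - x₀‖^2 - 2*⟪x - x₀, x - y⟫ + ‖x - y‖^2 := norm_sub_sq_real _ _
    rw [h4] at h2
    linarith [h2, h3]
  have hscal : 2 * (⟪x₀, (‖x-y‖⁻¹)•(x-y)⟫ - ⟪x, (‖x-y‖⁻¹)•(x-y)⟫) = -‖x - y‖ := by
    rw [real_inner_smul_right, real_inner_smul_right]
    have hin : ⟪x₀, x - y⟫ - ⟪x, x - y⟫ = -(‖x - y‖^2/2) := by
      have : ⟪x - x₀, x - y⟫ = ⟪x, x - y⟫ - ⟪x₀, x - y⟫ := by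
        rw [inner_sub_left]
      linarith [hkey, this ▸ hkey]
    have : ‖x-y‖⁻¹ * ⟪x₀, x-y⟫ - ‖x-y‖⁻¹ * ⟪x, x-y⟫ = ‖x-y‖⁻¹ * (⟪x₀, x-y⟫ - ⟪x, x-y⟫) := by ring
    rw [this, hin]
    field_simp
  rw [hscal, smul_smul]
  rw [show -‖x - y‖ * ‖x - y‖⁻¹ = -1 by field_simp]
  module


end RadialAux

open RadialAux in
/-- Symmetry in all directions implies radial symmetry: if for every unit
vector `e` the function `u` is invariant under reflection across some
hyperplane `{x : ⟪x, e⟫ = c_e}`, then `u` is radially symmetric about some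
point `x₀`. -/
theorem radial_of_all_reflections {n : ℕ} (u : EuclideanSpace ℝ (Fin n) → ℝ)
    (hu : Continuous u)
    (h : ∀ e : EuclideanSpace ℝ (Fin n), ‖e‖ = 1 →
      ∃ c : ℝ, ∀ x, u (x + (2 * (c - ⟪x, e⟫)) • e) = u x) :
    ∃ x₀ : EuclideanSpace ℝ (Fin n), ∀ x y : EuclideanSpace ℝ (Fin n),
      ‖x - x₀‖ = ‖y - x₀‖ → u x = u y := by
  classical
  by_cases hconst : ∀ x y, u x = u y
  · exact ⟨0, fun x y _ => hconst x y⟩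
  have h' : ∀ e : EuclideanSpace ℝ (Fin n), ‖e‖ = 1 → ∃ c, Refl u e c := h
  obtain ⟨x₀, key⟩ : ∃ x₀ : EuclideanSpace ℝ (Fin n),
      ∀ e, ‖e‖ = 1 → Refl u e ⟪x₀, e⟫ := by
    rcases Nat.lt_or_ge n 2 with hn | hn
    · interval_cases n
      · exact absurd (fun x y => by rw [Subsingleton.elim x y]) hconst
      · -- n = 1
        set e₀ : EuclideanSpace ℝ (Fin 1) := EuclideanSpace.single 0 1 with he₀def
        have he₀ : ‖e₀‖ = 1 := by
          rw [he₀def, EuclideanSpace.norm_single, norm_one]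
        obtain ⟨c, hc⟩ := h' e₀ he₀
        refine ⟨c • e₀, fun e he => ?_⟩
        have hrepr : e = (e 0) • e₀ := by
          refine PiLp.ext fun i => ?_
          fin_cases i
          simp [he₀def, EuclideanSpace.single_apply]
        have habs : |e 0| = 1 := by
          have h1 := EuclideanSpace.norm_eq e
          rw [Fin.sum_univ_one, Real.norm_eq_abs, Real.sqrt_sq (abs_nonneg (e 0))] at h1
          rw [← h1]; exact he
        rcases abs_eq (by norm_num : (0:ℝ) ≤ 1) |>.mp habs with h1 | h1
        · rw [hrepr, h1, one_smul]
          have : ⟪c • e₀, e₀⟫ = c := by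
            rw [real_inner_smul_left, real_inner_self_eq_norm_mul_norm, he₀]
            ring
          rw [this]; exact hc
        · rw [hrepr, h1]
          have hes : (-1 : ℝ) • e₀ = -e₀ := by module
          rw [hes]
          have : ⟪c • e₀, -e₀⟫ = -c := by
            rw [inner_neg_right, real_inner_smul_left, real_inner_self_eq_norm_mul_norm, he₀]
            ring
          rw [this]
          exact refl_neg hc
    · -- n ≥ 2
      have hrank : 2 ≤ Module.finrank ℝ (EuclideanSpace ℝ (Fin n)) := by
        rw [finrank_euclideanSpace_fin]; exact hn
      have htriv : ∀ w : EuclideanSpace ℝ (Fin n), Trans u w → w = 0 := by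
        intro w hw
        by_contra hw0
        apply hconst
        intro x y
        have := trans_total hrank h' hw hw0 (y - x) x
        rw [show x + (y - x) = y by abel] at this
        exact this.symm
      set b := stdOrthonormalBasis ℝ (EuclideanSpace ℝ (Fin n)) with hb
      set c : Fin (Module.finrank ℝ (EuclideanSpace ℝ (Fin n))) → ℝ :=
        fun i => (h' (b i) (b.orthonormal.1 i)).choose with hcdef
      have hc : ∀ i, Refl u (b i) (c i) := fun i => (h' (b i) (b.orthonormal.1 i)).choose_spec
      refine ⟨∑ i, c i • b i, fun e he => ?_⟩
      obtain ⟨ce, hce⟩ := h' e he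
      have := refl_const_eq htriv b c hc e ce he hce
      have hinner : ⟪∑ i, c i • b i, e⟫ = ∑ i, c i * ⟪b i, e⟫ := by
        rw [sum_inner]
        congr 1
        funext i
        rw [real_inner_smul_left]
      rw [hinner, ← this]
      exact hce
  refine ⟨x₀, fun x y hxy => ?_⟩
  by_cases hxyeq : x = y
  · rw [hxyeq]
  · obtain ⟨he, hpt⟩ := reflect_point hxyeq hxy
    have := key _ he x
    rw [hpt] at this
    exact this.symm
end
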